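/- Let n ∈ ℕ, A ∈ Mₙ(ℝ) and α̂ = (α₁,…,αₙ) ∈ ((0,1] ∩ ℚ)ⁿ with α_i = q_i/m_i in lowest terms (q_i, m_i ∈ ℕ). Let m be the least common multiple of m₁,…,mₙ, set p_i = q_i·(m/m_i) ∈ ℕ, γ = 1/m, and let P(s) = det(diag(s^{p₁},…,s^{pₙ}) − A) = Σ_{k=0}^{p₁+…+pₙ} b_k s^k, where b_k are the coefficients given by b_{p₁+…+pₙ} = 1, b₀ = (−1)ⁿ det A, b_k = Σ (−1)^{n−r} det A_{(i₁,…,i_r)} over all 1 ≤ i₁ < … < i_r ≤ n with p_{i₁}+…+p_{i_r} = k, and b_k = 0 if k is not such a partial sum. Let B be the companion matrix of the monic polynomial P (so det(sI − B) = P(s)). Then σ_{α̂}(A) ⊆ ℂ₋ if and only if every eigenvalue s of B with −γπ < arg s ≤ γπ satisfies s ≠ 0 and |arg s| > γπ/2, i.e., σ̃^γ(B) := { s ∈ ℂ : −γπ < arg s ≤ γπ and det(sI − B) = 0 } is contained in Ω_γ := { z ∈ ℂ \ {0} : |arg z| > γπ/2 and −γπ < arg z ≤ γπ }. -/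

import Mathlib

open Matrix in
lemma det_diagonal_add_aux {n : ℕ} (d : Fin n → ℂ) (M : Matrix (Fin n) (Fin n) ℂ) :
    (Matrix.diagonal d + M).det =
      ∑ S : Finset (Fin n), (∏ i ∈ S, d i) *
        (M.submatrix (fun i : ↥(Sᶜ) => (i : Fin n)) (fun j : ↥(Sᶜ) => (j : Fin n))).det := by
  classical
  set ei : Fin n → Fin n → ℂ := fun i => Pi.single i 1 with hei
  have hrow : (Matrix.diagonal d + M) =
      Matrix.of ((fun i => d i • ei i) + (fun i => M i)) := by
    ext i j
    by_cases h : i = j <;>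
      simp [Matrix.diagonal_apply, hei, Pi.single_apply, h, eq_comm]
  rw [hrow]
  have h1 : (Matrix.of ((fun i => d i • ei i) + (fun i => M i))).det
      = (Matrix.detRowAlternating (R := ℂ) (n := Fin n)).toMultilinearMap
          ((fun i => d i • ei i) + (fun i => M i)) := rfl
  rw [h1, MultilinearMap.map_add_univ]
  refine Finset.sum_congr rfl fun S _ => ?_
  set m' : Fin n → Fin n → ℂ := S.piecewise (fun i => ei i) (fun i => M i) with hm'
  have hpw : S.piecewise (fun i => d i • ei i) (fun i => M i)
      = S.piecewise (fun i => d i • m' i) m' := by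
    funext i
    by_cases h : i ∈ S <;> simp [Finset.piecewise, h, hm']
  rw [hpw, MultilinearMap.map_piecewise_smul]
  rw [smul_eq_mul]
  congr 1
  have hval : (Matrix.detRowAlternating (R := ℂ) (n := Fin n)).toMultilinearMap m'
      = (Matrix.of m').det := rfl
  rw [hval]
  let e : ↥S ⊕ {x : Fin n // ¬ x ∈ S} ≃ Fin n := Equiv.sumCompl (· ∈ S)
  rw [← Matrix.det_submatrix_equiv_self e]
  have hblock : (Matrix.of m').submatrix e e
      = Matrix.fromBlocks 1 0
          (Matrix.of fun (i : {x : Fin n // ¬ x ∈ S}) (j : ↥S) => M i.1 j.1)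
          (Matrix.of fun (i j : {x : Fin n // ¬ x ∈ S}) => M i.1 j.1) := by
    ext i j
    cases i with
    | inl i =>
      cases j with
      | inl j =>
        simp only [Matrix.submatrix_apply, Matrix.fromBlocks_apply₁₁, e,
          Equiv.sumCompl_apply_inl, m', Finset.piecewise_eq_of_mem _ _ _ i.2, hei, Matrix.of_apply]
        rw [Pi.single_apply, Matrix.one_apply]
        split_ifs with h1 h2 h2 <;> first | rfl | exact absurd (Subtype.ext h1).symm h2 |
          exact absurd (congrArg Subtype.val h2).symm h1
      | inr j =>
        have hne : (j : Fin n) ≠ (i : Fin n) := fun h => j.2 (h ▸ i.2)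
        simp [m', Finset.piecewise, i.2, hei, Pi.single_apply, hne, e]
    | inr i =>
      cases j <;> simp [m', Finset.piecewise, i.2, e]
  rw [hblock, Matrix.det_fromBlocks_zero₁₂, Matrix.det_one, one_mul]
  let e2 : ↥(Sᶜ) ≃ {x : Fin n // ¬ x ∈ S} :=
    Equiv.subtypeEquivRight (by intro x; simp)
  rw [← Matrix.det_submatrix_equiv_self e2]
  rfl

/-- The matrix `diag(z^{α₁},…,z^{αₙ}) - M`, with complex powers in the principal branch
(`Complex.cpow`, whose argument lies in `(-π, π]`). -/
noncomputable def fracMat {n : ℕ} (α : Fin n → ℝ) (M : Matrix (Fin n) (Fin n) ℂ) (z : ℂ) :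
    Matrix (Fin n) (Fin n) ℂ :=
  Matrix.diagonal (fun i => z ^ (α i : ℂ)) - M

/-- The `α`-order spectrum of a (complex) matrix `M`. -/
noncomputable def fracSpec {n : ℕ} (α : Fin n → ℝ) (M : Matrix (Fin n) (Fin n) ℂ) : Set ℂ :=
  {z : ℂ | (fracMat α M z).det = 0}

/-- Theorem 3.1: for rational orders `α_i = q_i/m_i` in lowest terms, with
`m = lcm(m₁,…,mₙ)`, `p_i = q_i·(m/m_i)`, `γ = 1/m`, coefficients `b_k` given by signed sums of
principal minors of `A` over subsets `S` with `Σ_{i∈S} p_i = k`, and `B` a companion-type matrix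
with `det(sI − B) = Σ_k b_k s^k`, the `α̂`-order spectrum of `A` lies in the open left
half-plane iff every root `s` of `det(sI − B)` with `−γπ < arg s ≤ γπ` lies in
`Ω_γ = {z ≠ 0 : |arg z| > γπ/2, −γπ < arg z ≤ γπ}`. -/
theorem fracSpec_subset_left_halfplane_iff_companion_roots
    {n : ℕ} (A : Matrix (Fin n) (Fin n) ℝ) (α : Fin n → ℝ)
    (hα : ∀ i, α i ∈ Set.Ioc (0 : ℝ) 1)
    (q m : Fin n → ℕ) (hm : ∀ i, 0 < m i) (hcop : ∀ i, Nat.Coprime (q i) (m i))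
    (hαq : ∀ i, α i = (q i : ℝ) / (m i : ℝ))
    (m₀ : ℕ) (hm₀ : m₀ = (Finset.univ : Finset (Fin n)).lcm m)
    (p : Fin n → ℕ) (hp : ∀ i, p i = q i * (m₀ / m i))
    (γ : ℝ) (hγ : γ = 1 / (m₀ : ℝ))
    (b : ℕ → ℂ)
    (hb : ∀ k, b k =
      ∑ S ∈ Finset.univ.filter (fun S : Finset (Fin n) => ∑ i ∈ S, p i = k),
        (-1 : ℂ) ^ (n - S.card) *
          Matrix.det ((A.map (fun a => (a : ℂ))).submatrix
            (fun i : ↥(Sᶜ) => (i : Fin n)) (fun j : ↥(Sᶜ) => (j : Fin n))))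
    (D : ℕ) (hD : D = ∑ i, p i)
    (B : Matrix (Fin D) (Fin D) ℂ)
    (hB : ∀ s : ℂ, (s • (1 : Matrix (Fin D) (Fin D) ℂ) - B).det =
      ∑ k ∈ Finset.range (D + 1), b k * s ^ k) :
    fracSpec α (A.map (fun a => (a : ℂ))) ⊆ {z : ℂ | z.re < 0} ↔
      {s : ℂ | (-(γ * Real.pi) < s.arg ∧ s.arg ≤ γ * Real.pi) ∧
          (s • (1 : Matrix (Fin D) (Fin D) ℂ) - B).det = 0} ⊆
        {z : ℂ | z ≠ 0 ∧ γ * (Real.pi / 2) < |z.arg| ∧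
          -(γ * Real.pi) < z.arg ∧ z.arg ≤ γ * Real.pi} := by
  classical
  set Aℂ := A.map (fun a => (a : ℂ)) with hAC
  have pi_pos := Real.pi_pos
  have hm₀dvd : ∀ i, m i ∣ m₀ := fun i => hm₀ ▸ Finset.dvd_lcm (Finset.mem_univ i)
  have hm₀ne : m₀ ≠ 0 := by
    rw [hm₀]
    intro h
    rw [Finset.lcm_eq_zero_iff] at h
    obtain ⟨i, -, hi⟩ := h
    exact (hm i).ne' hi
  have hm₀pos : 0 < m₀ := Nat.pos_of_ne_zero hm₀ne
  have hm₀R : (0:ℝ) < (m₀ : ℝ) := by exact_mod_cast hm₀pos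
  have hγpos : 0 < γ := by rw [hγ]; exact one_div_pos.mpr hm₀R
  have hγ1 : γ ≤ 1 := by
    rw [hγ, div_le_one hm₀R]
    exact_mod_cast hm₀pos
  have hq0 : ∀ i, 0 < q i := by
    intro i
    rcases Nat.eq_zero_or_pos (q i) with h0 | h
    · exfalso
      have h1 := (hα i).1
      rw [hαq i, h0] at h1
      simp at h1
    · exact h
  have hppos : ∀ i, 0 < p i := fun i => by
    rw [hp i]
    exact Nat.mul_pos (hq0 i) (Nat.div_pos (Nat.le_of_dvd hm₀pos (hm₀dvd i)) (hm i))
  have hpγ : ∀ i, (p i : ℝ) * γ = α i := by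
    intro i
    have hmi : (m i : ℝ) ≠ 0 := Nat.cast_ne_zero.2 (hm i).ne'
    have hcast : ((m₀ / m i : ℕ) : ℝ) = (m₀ : ℝ) / (m i : ℝ) := Nat.cast_div (hm₀dvd i) hmi
    rw [hp i, hαq i, hγ, Nat.cast_mul, hcast]
    field_simp
  -- polynomial identity
  have keyQ : ∀ s : ℂ, (s • (1 : Matrix (Fin D) (Fin D) ℂ) - B).det
      = (Matrix.diagonal (fun i => s ^ p i) - Aℂ).det := by
    intro s
    rw [hB]
    have maps : ∀ S ∈ (Finset.univ : Finset (Finset (Fin n))),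
        (∑ i ∈ S, p i) ∈ Finset.range (D + 1) := by
      intro S _
      rw [Finset.mem_range, Nat.lt_succ_iff, hD]
      exact Finset.sum_le_sum_of_subset (Finset.subset_univ S)
    have main := Finset.sum_fiberwise_of_maps_to maps
      (fun S : Finset (Fin n) => (-1 : ℂ) ^ (n - S.card) *
        (Aℂ.submatrix (fun i : ↥(Sᶜ) => (i : Fin n)) (fun j : ↥(Sᶜ) => (j : Fin n))).det
        * s ^ (∑ i ∈ S, p i))
    have lhs : ∑ k ∈ Finset.range (D + 1), b k * s ^ k
        = ∑ S : Finset (Fin n), (-1 : ℂ) ^ (n - S.card) *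
            (Aℂ.submatrix (fun i : ↥(Sᶜ) => (i : Fin n)) (fun j : ↥(Sᶜ) => (j : Fin n))).det
            * s ^ (∑ i ∈ S, p i) := by
      rw [← main]
      refine Finset.sum_congr rfl fun k _ => ?_
      rw [hb k, Finset.sum_mul]
      refine Finset.sum_congr rfl fun S hS => ?_
      rw [(Finset.mem_filter.mp hS).2]
    rw [lhs, sub_eq_add_neg, det_diagonal_add_aux]
    refine Finset.sum_congr rfl fun S _ => ?_
    have hneg : ((-Aℂ).submatrix (fun i : ↥(Sᶜ) => (i : Fin n)) (fun j : ↥(Sᶜ) => (j : Fin n)))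
        = -(Aℂ.submatrix (fun i : ↥(Sᶜ) => (i : Fin n)) (fun j : ↥(Sᶜ) => (j : Fin n))) := rfl
    rw [hneg, Matrix.det_neg, Finset.prod_pow_eq_pow_sum]
    have hcard : Fintype.card ↥(Sᶜ) = n - S.card := by
      rw [Fintype.card_coe, Finset.card_compl, Fintype.card_fin]
    rw [hcard]
    ring
  -- cpow reduction
  have hdiag : ∀ z : ℂ, fracMat α Aℂ z
      = Matrix.diagonal (fun i => (z ^ (γ : ℂ)) ^ (p i)) - Aℂ := by
    intro z
    unfold fracMat
    have hfun : (fun i => z ^ ((α i : ℝ) : ℂ)) = fun i => (z ^ ((γ : ℝ) : ℂ)) ^ (p i) := by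
      funext i
      have hcα : ((α i : ℝ) : ℂ) = ((p i : ℕ) : ℂ) * ((γ : ℝ) : ℂ) := by
        rw [← hpγ i, Complex.ofReal_mul, Complex.ofReal_natCast]
      rw [hcα, Complex.cpow_nat_mul]
    rw [hfun]
  have hred : ∀ z : ℂ, (fracMat α Aℂ z).det
      = ((z ^ (γ : ℂ)) • (1 : Matrix (Fin D) (Fin D) ℂ) - B).det := by
    intro z
    rw [hdiag z, ← keyQ]
  have hγC : ((γ : ℝ) : ℂ) ≠ 0 := by exact_mod_cast hγpos.ne'
  -- arg of cpow
  have hargpow : ∀ z : ℂ, z ≠ 0 → (z ^ (γ : ℂ)).arg = γ * z.arg := by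
    intro z hz
    have hlog : (Complex.log z * ((γ : ℝ) : ℂ)).im = γ * z.arg := by
      simp [Complex.mul_im, Complex.log_im, mul_comm]
    have h1 := Complex.neg_pi_lt_arg z
    have h2 := Complex.arg_le_pi z
    have l1 : γ * (-Real.pi) < γ * z.arg := mul_lt_mul_of_pos_left h1 hγpos
    have l2 : γ * z.arg ≤ γ * Real.pi := mul_le_mul_of_nonneg_left h2 hγpos.le
    have l3 : γ * Real.pi ≤ Real.pi := by nlinarith
    rw [Complex.cpow_def_of_ne_zero hz, ← Complex.log_im,
      Complex.log_exp (by rw [hlog]; nlinarith) (by rw [hlog]; nlinarith), hlog]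
  -- surjectivity onto the sector
  have hγm : (m₀ : ℝ) * γ = 1 := by
    rw [hγ, mul_one_div, div_self hm₀R.ne']
  have hsurj : ∀ s : ℂ, s ≠ 0 → -(γ * Real.pi) < s.arg → s.arg ≤ γ * Real.pi →
      ((s ^ m₀ : ℂ)) ^ (γ : ℂ) = s := by
    intro s hs h1 h2
    have hlogim : (((m₀ : ℕ) : ℂ) * Complex.log s).im = (m₀ : ℝ) * s.arg := by
      simp [Complex.mul_im, Complex.log_im]
    have u1 : (m₀ : ℝ) * s.arg ≤ Real.pi := by
      have := mul_le_mul_of_nonneg_left h2 hm₀R.le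
      calc (m₀ : ℝ) * s.arg ≤ (m₀ : ℝ) * (γ * Real.pi) := this
        _ = ((m₀ : ℝ) * γ) * Real.pi := by ring
        _ = Real.pi := by rw [hγm, one_mul]
    have u2 : -Real.pi < (m₀ : ℝ) * s.arg := by
      have := mul_lt_mul_of_pos_left h1 hm₀R
      have e1 : (m₀ : ℝ) * -(γ * Real.pi) = -Real.pi := by
        rw [mul_neg, ← mul_assoc, hγm, one_mul]
      linarith [e1 ▸ this]
    have hpow : (s ^ m₀ : ℂ) = Complex.exp (((m₀ : ℕ) : ℂ) * Complex.log s) := by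
      rw [Complex.exp_nat_mul, Complex.exp_log hs]
    rw [hpow, Complex.cpow_def_of_ne_zero (Complex.exp_ne_zero _),
      Complex.log_exp (by rw [hlogim]; exact u2) (by rw [hlogim]; exact u1)]
    have hc : ((m₀ : ℕ) : ℂ) * ((γ : ℝ) : ℂ) = 1 := by
      rw [hγ]
      push_cast
      rw [mul_one_div, div_self (by exact_mod_cast hm₀ne)]
    have hassoc : ((m₀ : ℕ) : ℂ) * Complex.log s * ((γ : ℝ) : ℂ)
        = (((m₀ : ℕ) : ℂ) * ((γ : ℝ) : ℂ)) * Complex.log s := by ring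
    rw [hassoc, hc, one_mul, Complex.exp_log hs]
  constructor
  · intro h s hs
    obtain ⟨⟨h1, h2⟩, hdet0⟩ := hs
    by_cases hs0 : s = 0
    · exfalso
      subst hs0
      have h0mem : (0 : ℂ) ∈ fracSpec α Aℂ := by
        show (fracMat α Aℂ 0).det = 0
        rw [hred 0, Complex.zero_cpow hγC]
        exact hdet0
      have := h h0mem
      simp at this
    · refine ⟨hs0, ?_, h1, h2⟩
      have hz0 : (s ^ m₀ : ℂ) ≠ 0 := pow_ne_zero _ hs0
      have hzs : (s ^ m₀ : ℂ) ^ (γ : ℂ) = s := hsurj s hs0 h1 h2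
      have hzm : (s ^ m₀ : ℂ) ∈ fracSpec α Aℂ := by
        show (fracMat α Aℂ (s ^ m₀)).det = 0
        rw [hred, hzs]
        exact hdet0
      have hre : (s ^ m₀ : ℂ).re < 0 := h hzm
      have habs : Real.pi / 2 < |(s ^ m₀ : ℂ).arg| := by
        by_contra hc
        push_neg at hc
        have := Complex.abs_arg_le_pi_div_two_iff.mp hc
        linarith
      have hargs : s.arg = γ * (s ^ m₀ : ℂ).arg := by
        conv_lhs => rw [← hzs]
        exact hargpow _ hz0
      rw [hargs, abs_mul, abs_of_pos hγpos]
      exact (mul_lt_mul_iff_right₀ hγpos).mpr habs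
  · intro h z hzmem
    show z.re < 0
    have hzdet : (fracMat α Aℂ z).det = 0 := hzmem
    by_cases hz0 : z = 0
    · exfalso
      subst hz0
      have hdet0 : ((0 : ℂ) • (1 : Matrix (Fin D) (Fin D) ℂ) - B).det = 0 := by
        rw [hred 0, Complex.zero_cpow hγC] at hzdet
        exact hzdet
      have h0 := h ⟨⟨by rw [Complex.arg_zero]; nlinarith,
        by rw [Complex.arg_zero]; nlinarith⟩, hdet0⟩
      exact h0.1 rfl
    · have hdet0 : ((z ^ (γ : ℂ)) • (1 : Matrix (Fin D) (Fin D) ℂ) - B).det = 0 := by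
        rw [← hred z]
        exact hzdet
      have harg : (z ^ (γ : ℂ)).arg = γ * z.arg := hargpow z hz0
      have hb1 : -(γ * Real.pi) < (z ^ (γ : ℂ)).arg := by
        rw [harg]
        have := mul_lt_mul_of_pos_left (Complex.neg_pi_lt_arg z) hγpos
        nlinarith
      have hb2 : (z ^ (γ : ℂ)).arg ≤ γ * Real.pi :=
        harg ▸ mul_le_mul_of_nonneg_left (Complex.arg_le_pi z) hγpos.le
      obtain ⟨-, habs, -, -⟩ := h ⟨⟨hb1, hb2⟩, hdet0⟩
      rw [harg, abs_mul, abs_of_pos hγpos] at habs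
      have hgt : Real.pi / 2 < |z.arg| := (mul_lt_mul_iff_right₀ hγpos).mp habs
      by_contra hc
      push_neg at hc
      have := Complex.abs_arg_le_pi_div_two_iff.mpr hc
      linarith
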